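/- Let p be an odd prime and let G be a finite group that is p-stable. Then G satisfies the following condition: for every subgroup M of G that is maximal with respect to the property O_p(M) ≠ 1 (i.e. O_p(M) ≠ 1 and every subgroup M' with M ≤ M' and O_p(M') ≠ 1 equals M), for every p-subgroup Q of M such that O_{p'}(M)·Q is normal in M, and for every x ∈ N_M(Q) with [[a,x],x] = 1 for all a ∈ Q, the image of x under the natural homomorphism N_M(Q) → N_M(Q)/C_M(Q) lies in O_p(N_M(Q)/C_M(Q)). -/

import Mathlib

open scoped commutatorElement

/-- `O_p(G)`: the largest normal `p`-subgroup of `G`. -/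
def pCore (p : ℕ) (G : Type*) [Group G] : Subgroup G :=
  sSup {N : Subgroup G | N.Normal ∧ IsPGroup p N}

instance relCent_normal {G : Type*} [Group G] (Q : Subgroup G) :
    ((Subgroup.centralizer (Q : Set G)).subgroupOf (Subgroup.normalizer (Q : Set G))).Normal := by
  rw [← Subgroup.normalizerMonoidHom_ker]
  exact MonoidHom.normal_ker _

/-- A group `G` is `p`-stable if for every `p`-subgroup `Q` and every `x ∈ N_G(Q)` with
`[[a,x],x] = 1` for all `a ∈ Q`, the image of `x` in `N_G(Q)/C_G(Q)` lies in
`O_p(N_G(Q)/C_G(Q))`. -/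
def IsPStable (p : ℕ) (G : Type*) [Group G] : Prop :=
  ∀ Q : Subgroup G, IsPGroup p Q →
    ∀ x : (Subgroup.normalizer (Q : Set G)), (∀ a ∈ Q, ⁅⁅a, (x : G)⁆, (x : G)⁆ = 1) →
      (QuotientGroup.mk x :
          (Subgroup.normalizer (Q : Set G)) ⧸ (Subgroup.centralizer (Q : Set G)).subgroupOf (Subgroup.normalizer (Q : Set G))) ∈
        pCore p ((Subgroup.normalizer (Q : Set G)) ⧸ (Subgroup.centralizer (Q : Set G)).subgroupOf (Subgroup.normalizer (Q : Set G)))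

/-- `O_{p'}(G)`: the largest normal subgroup of `G` of order coprime to `p`. -/
def pPrimeCore (p : ℕ) (G : Type*) [Group G] : Subgroup G :=
  sSup {N : Subgroup G | N.Normal ∧ (Nat.card N).Coprime p}

lemma pCore_spec (p : ℕ) (H : Type*) [Group H] [Finite H] :
    (pCore p H).Normal ∧ IsPGroup p (pCore p H) := by
  have : Finite (Subgroup H) := Finite.of_injective _ SetLike.coe_injective
  set S : Set (Subgroup H) := {N | N.Normal ∧ IsPGroup p N} with hSdef
  have hbot : (⊥ : Subgroup H) ∈ S := ⟨inferInstance, IsPGroup.of_bot⟩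
  have hclosed : SupClosed S := by
    rintro A ⟨hA1, hA2⟩ B ⟨hB1, hB2⟩
    haveI := hA1; haveI := hB1
    exact ⟨Subgroup.sup_normal A B, hA2.to_sup_of_normal_right hB2⟩
  have hfin : S.Finite := Set.toFinite S
  have hmem : sSup S ∈ S := by
    have : sSup S = hfin.toFinset.sup id := by
      rw [Finset.sup_id_eq_sSup, hfin.coe_toFinset]
    rw [this]
    exact hclosed.finsetSup_mem ⟨⊥, hfin.mem_toFinset.2 hbot⟩
      (fun i hi => hfin.mem_toFinset.1 hi)
  exact hmem


/-- If a finite group `G` is `p`-stable (`p` an odd prime), then for every subgroup `M`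
maximal with respect to `O_p(M) ≠ 1`, every `p`-subgroup `Q` of `M` with `O_{p'}(M)·Q ⊴ M`,
and every `x ∈ N_M(Q)` with `[[a,x],x] = 1` for all `a ∈ Q`, the image of `x` in
`N_M(Q)/C_M(Q)` lies in `O_p(N_M(Q)/C_M(Q))`. -/
theorem pStable_implies_glauberman_condition (p : ℕ) (hp : p.Prime) (hodd : Odd p)
    (G : Type*) [Group G] [Finite G] (hG : IsPStable p G)
    (M : Subgroup G) (hM : pCore p M ≠ ⊥)
    (hMmax : ∀ M' : Subgroup G, M ≤ M' → pCore p M' ≠ ⊥ → M' = M)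
    (Q : Subgroup M) (hQ : IsPGroup p Q) (hQnorm : (pPrimeCore p M ⊔ Q).Normal)
    (x : (Subgroup.normalizer (Q : Set M))) (hx : ∀ a ∈ Q, ⁅⁅a, (x : M)⁆, (x : M)⁆ = 1) :
    (QuotientGroup.mk x :
        (Subgroup.normalizer (Q : Set M)) ⧸ (Subgroup.centralizer (Q : Set M)).subgroupOf (Subgroup.normalizer (Q : Set M))) ∈
      pCore p ((Subgroup.normalizer (Q : Set M)) ⧸ (Subgroup.centralizer (Q : Set M)).subgroupOf (Subgroup.normalizer (Q : Set M))) := by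
  classical
  set Q' : Subgroup G := Q.map M.subtype with hQ'def
  have hQ' : IsPGroup p Q' := hQ.map M.subtype
  -- elements of N_M(Q) normalize Q' in G
  have hnorm : ∀ z : (Subgroup.normalizer (Q : Set M)), ((z : M) : G) ∈ (Subgroup.normalizer (Q' : Set G)) := by
    intro z
    rw [Subgroup.mem_normalizer_iff]
    intro g
    constructor
    · rintro ⟨b, hb, rfl⟩
      refine ⟨(z : M) * b * (z : M)⁻¹, ?_, by simp⟩
      exact (Subgroup.mem_normalizer_iff.mp z.2 b).mp hb
    · rintro hg
      obtain ⟨b, hb, hbe⟩ := hg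
      have hb' : (z : M)⁻¹ * b * (z : M) ∈ Q := by
        refine (Subgroup.mem_normalizer_iff.mp z.2 _).mpr ?_
        have : (z : M) * ((z : M)⁻¹ * b * (z : M)) * (z : M)⁻¹ = b := by group
        rw [this]; exact hb
      refine ⟨(z : M)⁻¹ * b * (z : M), hb', ?_⟩
      have hbe' : (b : G) = ((z : M) : G) * g * (((z : M) : G))⁻¹ := hbe
      show ((((z : M))⁻¹ * b * (z : M) : M) : G) = g
      push_cast
      rw [hbe']; group
  -- the homomorphism N_M(Q) →* N_G(Q')
  set f : (Subgroup.normalizer (Q : Set M)) →* (Subgroup.normalizer (Q' : Set G)) :=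
    { toFun := fun z => ⟨((z : M) : G), hnorm z⟩
      map_one' := by ext; simp
      map_mul' := by intro a b; ext; simp } with hfdef
  -- centralizer compatibility
  have hcomap : (Subgroup.centralizer (Q : Set M)).subgroupOf (Subgroup.normalizer (Q : Set M)) ≤
      ((Subgroup.centralizer (Q' : Set G)).subgroupOf (Subgroup.normalizer (Q' : Set G))).comap f := by
    intro z hz
    simp only [Subgroup.mem_subgroupOf, Subgroup.mem_comap] at hz ⊢
    rw [Subgroup.mem_centralizer_iff] at hz ⊢
    rintro g ⟨b, hb, rfl⟩
    have := hz b hb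
    exact congrArg (M.subtype) this
  set ψ : ((Subgroup.normalizer (Q : Set M)) ⧸ (Subgroup.centralizer (Q : Set M)).subgroupOf (Subgroup.normalizer (Q : Set M))) →*
      ((Subgroup.normalizer (Q' : Set G)) ⧸ (Subgroup.centralizer (Q' : Set G)).subgroupOf (Subgroup.normalizer (Q' : Set G))) :=
    QuotientGroup.map _ _ f hcomap with hψdef
  -- ψ is injective
  have hinj : Function.Injective ψ := by
    rw [injective_iff_map_eq_one]
    intro a ha
    induction a using QuotientGroup.induction_on with
    | H z =>
      rw [hψdef, QuotientGroup.map_mk, QuotientGroup.eq_one_iff] at ha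
      rw [QuotientGroup.eq_one_iff]
      simp only [Subgroup.mem_subgroupOf] at ha ⊢
      rw [Subgroup.mem_centralizer_iff] at ha ⊢
      intro b hb
      have := ha (M.subtype b) ⟨b, hb, rfl⟩
      exact Subtype.ext this
  -- commutator condition in G
  have hx' : ∀ a ∈ Q', ⁅⁅a, ((f x : (Subgroup.normalizer (Q' : Set G))) : G)⁆, ((f x : (Subgroup.normalizer (Q' : Set G))) : G)⁆ = 1 := by
    rintro a ⟨b, hb, rfl⟩
    have h1 := hx b hb
    have : M.subtype ⁅⁅b, (x : M)⁆, (x : M)⁆ = M.subtype 1 := congrArg _ h1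
    show ⁅⁅((b : M) : G), ((x : M) : G)⁆, ((x : M) : G)⁆ = 1
    simpa [commutatorElement_def] using this
  -- apply p-stability of G
  have hbig := hG Q' hQ' (f x) hx'
  obtain ⟨hN, hP⟩ := pCore_spec p
    ((Subgroup.normalizer (Q' : Set G)) ⧸ (Subgroup.centralizer (Q' : Set G)).subgroupOf (Subgroup.normalizer (Q' : Set G)))
  -- pull back
  set N := (pCore p
      ((Subgroup.normalizer (Q' : Set G)) ⧸ (Subgroup.centralizer (Q' : Set G)).subgroupOf (Subgroup.normalizer (Q' : Set G)))).comap ψ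
    with hNdef
  have hNnormal : N.Normal := hN.comap ψ
  have hNp : IsPGroup p N := hP.comap_of_injective ψ hinj
  have hxN : (QuotientGroup.mk x :
      (Subgroup.normalizer (Q : Set M)) ⧸ (Subgroup.centralizer (Q : Set M)).subgroupOf (Subgroup.normalizer (Q : Set M))) ∈ N := by
    rw [hNdef, Subgroup.mem_comap, hψdef, QuotientGroup.map_mk]
    exact hbig
  have hNS : N ∈ {K : Subgroup ((Subgroup.normalizer (Q : Set M)) ⧸
      (Subgroup.centralizer (Q : Set M)).subgroupOf (Subgroup.normalizer (Q : Set M))) |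
      K.Normal ∧ IsPGroup p K} := ⟨hNnormal, hNp⟩
  exact le_sSup hNS hxN
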